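/- Suppose ω = (q_n)_{n≥1} ∈ (0,1)^ℕ is increasing, i.e., q_n ≤ q_{n+1} for all n. Order the components of E_k(ω) from left to right as I_k^1, …, I_k^{2^k} and let J_k^j be the open interval between I_k^j and I_k^{j+1}. Then for every k ≥ 1 and every j ∈ {1, …, 2^k − 1}: if j is odd then |J_k^j| ≤ (2/(1−q_k))·|I_k^j|, and if j is even then |J_k^j| ≤ 2·(2/(1−q_k))^k·|I_k^j|. -/

import Mathlib

/-- `L_n = 2^{-n} ∏_{i=1}^n (1 - q_i)`. -/
noncomputable def cantorL (q : ℕ → ℝ) (n : ℕ) : ℝ :=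
  (∏ i ∈ Finset.Icc 1 n, (1 - q i)) / 2 ^ n

/-- Left endpoint of the `j`-th level-`k` interval `I_k^j` (`1 ≤ j ≤ 2^k`), i.e. the
level-`k` interval whose label `ε = (ε_1,…,ε_k)` has binary value
`v(ε) = ∑ ε_i 2^{k-i} = j - 1`; so `I_k^j = [cantorAIdx q k j, cantorAIdx q k j + L_k]`
(an interval of length `L_k`) and, for `1 ≤ j ≤ 2^k - 1`, the gap `J_k^j` between `I_k^j`
and `I_k^{j+1}` has length `cantorAIdx q k (j+1) - (cantorAIdx q k j + L_k)`. -/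
noncomputable def cantorAIdx (q : ℕ → ℝ) (k j : ℕ) : ℝ :=
  ∑ i ∈ Finset.Icc 1 k, if Nat.testBit (j - 1) (k - i) then cantorL q (i - 1) - cantorL q i else 0

lemma qchain (q : ℕ → ℝ) (hmono : ∀ n, 1 ≤ n → q n ≤ q (n + 1)) :
    ∀ a b, 1 ≤ a → a ≤ b → q a ≤ q b := by
  intro a b ha hab
  induction b with
  | zero => omega
  | succ b ih =>
    rcases Nat.lt_or_ge a (b + 1) with h | h
    · exact le_trans (ih (by omega)) (hmono b (by omega))
    · have : a = b + 1 := by omega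
      simp [this]

lemma cantorL_pos (q : ℕ → ℝ) (hq : ∀ i, 1 ≤ i → q i ∈ Set.Ioo (0 : ℝ) 1) (n : ℕ) :
    0 < cantorL q n := by
  unfold cantorL
  apply div_pos
  · apply Finset.prod_pos
    intro i hi
    simp only [Finset.mem_Icc] at hi
    have := (hq i hi.1).2
    linarith
  · positivity

lemma cantorL_succ (q : ℕ → ℝ) (n : ℕ) :
    cantorL q (n + 1) = (1 - q (n + 1)) * cantorL q n / 2 := by
  unfold cantorL
  rw [Finset.prod_Icc_succ_top (by omega : 1 ≤ n + 1)]
  rw [pow_succ]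
  field_simp

lemma telescope (f : ℕ → ℝ) :
    ∀ b a, a ≤ b → ∑ i ∈ Finset.Icc (a + 1) b, (f (i - 1) - f i) = f a - f b := by
  intro b
  induction b with
  | zero =>
    intro a ha
    obtain rfl : a = 0 := Nat.le_zero.mp ha
    simp
  | succ b ih =>
    intro a ha
    rcases Nat.lt_or_ge a (b + 1) with h | h
    · rw [Finset.sum_Icc_succ_top (by omega : a + 1 ≤ b + 1), ih a (by omega)]
      simp only [Nat.add_sub_cancel]
      ring
    · have : a = b + 1 := by omega
      subst this
      simp

lemma bits_shift (m' : ℕ) : ∀ s, 1 ≤ s → Nat.testBit (2 * m') s = Nat.testBit (2 * m' + 1) s := by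
  intro s hs
  obtain ⟨s', rfl⟩ : ∃ s', s = s' + 1 := ⟨s - 1, by omega⟩
  rw [Nat.testBit_add_one, Nat.testBit_add_one]
  have h : 2 * m' / 2 = (2 * m' + 1) / 2 := by omega
  rw [h]

lemma cantor_gap_eq (q : ℕ → ℝ) (k t m' : ℕ) (ht : t < k) :
    cantorAIdx q k (2 ^ t * (2 * m' + 1) + 1) - cantorAIdx q k (2 ^ t * (2 * m' + 1)) =
      cantorL q (k - t - 1) - 2 * cantorL q (k - t) + cantorL q k := by
  have h2t : 1 ≤ 2 ^ t := Nat.one_le_two_pow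
  set j := 2 ^ t * (2 * m' + 1) with hjdef
  have hj1 : j - 1 = 2 ^ t * (2 * m') + (2 ^ t - 1) := by
    have h : j = 2 ^ t * (2 * m') + 2 ^ t := by rw [hjdef]; ring
    omega
  have hbj : ∀ p, Nat.testBit j p = if p < t then false else Nat.testBit (2 * m' + 1) (p - t) := by
    intro p
    rw [hjdef, Nat.testBit_two_pow_mul]
    rcases Nat.lt_or_ge p t with h | h
    · simp [h, Nat.not_le.mpr h]
    · simp [h, Nat.not_lt.mpr h]
  have hbj' : ∀ p, Nat.testBit (j - 1) p = if p < t then true else Nat.testBit (2 * m') (p - t) := by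
    intro p
    rw [hj1, Nat.testBit_two_pow_mul_add _ (by omega : 2 ^ t - 1 < 2 ^ t)]
    rcases Nat.lt_or_ge p t with h | h
    · simp [h]
    · simp [h, Nat.not_lt.mpr h]
  set c : ℕ → ℝ := fun i => cantorL q (i - 1) - cantorL q i with hc
  have key : cantorAIdx q k (j + 1) - cantorAIdx q k j
      = (∑ i ∈ Finset.Ioc 0 (k - t), (if i = k - t then c i else 0))
        + (∑ i ∈ Finset.Ioc (k - t) k, (-(c i))) := by
    unfold cantorAIdx
    rw [Nat.add_sub_cancel, ← Finset.sum_sub_distrib,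
      show Finset.Icc 1 k = Finset.Ioc 0 k from Finset.Icc_add_one_left_eq_Ioc 0 k,
      ← Finset.sum_Ioc_consecutive _ (Nat.zero_le (k - t)) (Nat.sub_le k t)]
    congr 1
    · apply Finset.sum_congr rfl
      intro i hi
      simp only [Finset.mem_Ioc] at hi
      rcases eq_or_ne i (k - t) with h | h
      · subst h
        have hkt : k - (k - t) = t := by omega
        rw [hbj, hbj', hkt]
        simp only [lt_irrefl, if_false, Nat.sub_self]
        have e1 : Nat.testBit (2 * m' + 1) 0 = true := by
          rw [Nat.testBit_zero]; exact decide_eq_true (by omega)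
        have e2 : Nat.testBit (2 * m') 0 = false := by
          rw [Nat.testBit_zero]; exact decide_eq_false (by omega)
        rw [e1, e2]
        simp [hc]
      · have hgt : t < k - i := by omega
        have hge : ¬ (k - i < t) := by omega
        rw [hbj, hbj', if_neg hge, if_neg hge,
          ← bits_shift m' (k - i - t) (by omega)]
        simp [h]
    · apply Finset.sum_congr rfl
      intro i hi
      simp only [Finset.mem_Ioc] at hi
      have hlt : k - i < t := by omega
      rw [hbj, hbj', if_pos hlt, if_pos hlt]
      simp [hc]
  rw [key, Finset.sum_ite_eq' _ (k - t) c,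
    if_pos (by simp only [Finset.mem_Ioc]; omega)]
  rw [← Finset.Icc_add_one_left_eq_Ioc]
  have htel : ∑ i ∈ Finset.Icc (k - t + 1) k, (-(c i))
      = -(cantorL q (k - t) - cantorL q k) := by
    rw [Finset.sum_neg_distrib]
    congr 1
    calc ∑ i ∈ Finset.Icc (k - t + 1) k, c i
        = ∑ i ∈ Finset.Icc (k - t + 1) k, (cantorL q (i - 1) - cantorL q i) := rfl
      _ = cantorL q (k - t) - cantorL q k := telescope (cantorL q) k (k - t) (by omega)
  rw [htel]
  show cantorL q (k - t - 1) - cantorL q (k - t) - (cantorL q (k - t) - cantorL q k)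
      = cantorL q (k - t - 1) - 2 * cantorL q (k - t) + cantorL q k
  ring

lemma cantorL_le_pow (q : ℕ → ℝ) (hq : ∀ i, 1 ≤ i → q i ∈ Set.Ioo (0 : ℝ) 1)
    (hmono : ∀ n, 1 ≤ n → q n ≤ q (n + 1)) (k : ℕ) (hk : 1 ≤ k) :
    ∀ d a, a + d ≤ k → cantorL q a ≤ (2 / (1 - q k)) ^ d * cantorL q (a + d) := by
  have hqk := hq k hk
  have hqk1 : 0 < 1 - q k := by have := hqk.2; linarith
  intro d
  induction d with
  | zero => intro a _; simp
  | succ d ih =>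
    intro a ha
    have ha1k : 1 ≤ a + 1 := by omega
    have hqa : q (a + 1) ≤ q k := qchain q hmono (a + 1) k ha1k (by omega)
    have hqa1 : 0 < 1 - q (a + 1) := by have := (hq (a + 1) ha1k).2; linarith
    have hL1 : 0 < cantorL q (a + 1) := cantorL_pos q hq (a + 1)
    have step : cantorL q a ≤ (2 / (1 - q k)) * cantorL q (a + 1) := by
      have heq : cantorL q a = (2 / (1 - q (a + 1))) * cantorL q (a + 1) := by
        rw [cantorL_succ q a]
        field_simp
      rw [heq]
      apply mul_le_mul_of_nonneg_right _ hL1.le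
      apply div_le_div_of_nonneg_left (by norm_num) hqk1 (by linarith)
    calc cantorL q a ≤ (2 / (1 - q k)) * cantorL q (a + 1) := step
      _ ≤ (2 / (1 - q k)) * ((2 / (1 - q k)) ^ d * cantorL q (a + 1 + d)) := by
          apply mul_le_mul_of_nonneg_left (ih (a + 1) (by omega)) (by positivity)
      _ = (2 / (1 - q k)) ^ (d + 1) * cantorL q (a + (d + 1)) := by
          rw [pow_succ]
          have : a + 1 + d = a + (d + 1) := by omega
          rw [this]
          ring

/-- if `ω = (q_n)` is increasing then for every `k ≥ 1` and
`1 ≤ j ≤ 2^k − 1`, the gap `J_k^j` satisfies `|J_k^j| ≤ (2/(1−q_k))·|I_k^j|` when `j` is odd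
and `|J_k^j| ≤ 2·(2/(1−q_k))^k·|I_k^j|` when `j` is even, where `|I_k^j| = L_k`. -/
theorem cantor_gap_bounds_of_increasing (q : ℕ → ℝ)
    (hq : ∀ i, 1 ≤ i → q i ∈ Set.Ioo (0 : ℝ) 1)
    (hmono : ∀ n, 1 ≤ n → q n ≤ q (n + 1))
    (k j : ℕ) (hk : 1 ≤ k) (hj₁ : 1 ≤ j) (hj₂ : j ≤ 2 ^ k - 1) :
    (Odd j →
      cantorAIdx q k (j + 1) - (cantorAIdx q k j + cantorL q k)
        ≤ 2 / (1 - q k) * cantorL q k)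
    ∧ (Even j →
      cantorAIdx q k (j + 1) - (cantorAIdx q k j + cantorL q k)
        ≤ 2 * (2 / (1 - q k)) ^ k * cantorL q k) := by
  have hqk := hq k hk
  have hqk1 : 0 < 1 - q k := by have := hqk.2; linarith
  obtain ⟨t, m, hm, hjeq⟩ := Nat.exists_eq_two_pow_mul_odd (show j ≠ 0 by omega)
  obtain ⟨m', rfl⟩ := hm
  subst hjeq
  set j := 2 ^ t * (2 * m' + 1) with hjdef
  have h2t : 1 ≤ 2 ^ t := Nat.one_le_two_pow
  have htk : t < k := by
    by_contra h
    have h1 : 2 ^ k ≤ 2 ^ t := Nat.pow_le_pow_right (by norm_num) (by omega)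
    have h2 : 2 ^ t ≤ j := Nat.le_mul_of_pos_right _ (by omega)
    omega
  have hgap : cantorAIdx q k (j + 1) - (cantorAIdx q k j + cantorL q k)
      = q (k - t) * cantorL q (k - t - 1) := by
    have := cantor_gap_eq q k t m' htk
    have hLs : cantorL q (k - t) = (1 - q (k - t)) * cantorL q (k - t - 1) / 2 := by
      have hkt : k - t - 1 + 1 = k - t := by omega
      rw [← hkt, cantorL_succ q (k - t - 1)]
      simp
    rw [show cantorAIdx q k (j + 1) - (cantorAIdx q k j + cantorL q k)
        = cantorAIdx q k (j + 1) - cantorAIdx q k j - cantorL q k by ring, this, hLs]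
    ring
  have hktk : 1 ≤ k - t := by omega
  have hqle : q (k - t) ≤ q k := qchain q hmono (k - t) k hktk (by omega)
  have hqpos : 0 < q (k - t) := (hq (k - t) hktk).1
  have hLk : 0 < cantorL q k := cantorL_pos q hq k
  have hLbound : cantorL q (k - t - 1) ≤ (2 / (1 - q k)) ^ (t + 1) * cantorL q k := by
    have := cantorL_le_pow q hq hmono k hk (t + 1) (k - t - 1) (by omega)
    rwa [show k - t - 1 + (t + 1) = k by omega] at this
  have hbound : cantorAIdx q k (j + 1) - (cantorAIdx q k j + cantorL q k)
      ≤ q k * ((2 / (1 - q k)) ^ (t + 1) * cantorL q k) := by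
    rw [hgap]
    apply mul_le_mul hqle hLbound (cantorL_pos q hq _).le (by linarith [hqk.1])
  have hqk1' : q k ≤ 1 := hqk.2.le
  have hB1 : (1 : ℝ) ≤ 2 / (1 - q k) := by
    rw [le_div_iff₀ hqk1]; linarith
  constructor
  · intro hodd
    have ht0 : t = 0 := by
      by_contra h
      have h2 : (2 : ℕ) ∣ 2 ^ t := dvd_pow_self 2 h
      have h3 : (2 : ℕ) ∣ j := h2.mul_right _
      rw [Nat.odd_iff] at hodd
      omega
    rw [ht0] at hbound
    calc cantorAIdx q k (j + 1) - (cantorAIdx q k j + cantorL q k)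
        ≤ q k * ((2 / (1 - q k)) ^ (0 + 1) * cantorL q k) := hbound
      _ = q k * (2 / (1 - q k) * cantorL q k) := by rw [pow_one]
      _ ≤ 1 * (2 / (1 - q k) * cantorL q k) := by
          apply mul_le_mul_of_nonneg_right hqk1' (by positivity)
      _ = 2 / (1 - q k) * cantorL q k := one_mul _
  · intro _
    have hpow : (2 / (1 - q k)) ^ (t + 1) ≤ (2 / (1 - q k)) ^ k :=
      pow_le_pow_right₀ hB1 (by omega)
    calc cantorAIdx q k (j + 1) - (cantorAIdx q k j + cantorL q k)
        ≤ q k * ((2 / (1 - q k)) ^ (t + 1) * cantorL q k) := hbound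
      _ ≤ 1 * ((2 / (1 - q k)) ^ k * cantorL q k) := by
          apply mul_le_mul hqk1' (mul_le_mul_of_nonneg_right hpow hLk.le)
            (by positivity) (by norm_num)
      _ ≤ 2 * (2 / (1 - q k)) ^ k * cantorL q k := by
          have : (0:ℝ) ≤ (2 / (1 - q k)) ^ k * cantorL q k := by positivity
          linarith
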